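/- Let the n individuals be partitioned into centers I_1,…,I_C with an arbitrary nonnegative m×n valuation matrix A. Let b̃ be any pure Nash equilibrium of the Trading Post mechanism with proportional budgets in which each center's objective is the Nash social welfare of its own individuals, NSW_c(y) = (∏_{i∈I_c} u_{(c,i)}(y))^{1/|I_c|}, and let ỹ be the induced allocation. Then for every feasible allocation y*, NSW(y*) ≤ 2 · NSW(ỹ), where NSW(y) = (∏_{i=1}^n u_i(y))^{1/n}. That is, the Price of Anarchy of the Trading Post mechanism with respect to Nash social welfare is at most 2. -/

import Mathlib

open scoped BigOperators

/-- An allocation is feasible if all fractions are nonnegative and each item is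
allocated at most once in total. -/
def Feasible {m n : ℕ} (y : Fin m → Fin n → ℝ) : Prop :=
  (∀ j i, 0 ≤ y j i) ∧ ∀ j, ∑ i, y j i ≤ 1

/-- The (additive) utility of individual `i` under allocation `y`:
`u_i(y) = Σ_j A_{j,i} · y_{j,i}`. -/
noncomputable def util {m n : ℕ} (A : Matrix (Fin m) (Fin n) ℝ)
    (y : Fin m → Fin n → ℝ) (i : Fin n) : ℝ :=
  ∑ j, A j i * y j i

/-- The generalized `p`-mean welfare `GMW_p(y) = ((1/n) Σᵢ uᵢ(y)^p)^{1/p}`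
(real powers). -/
noncomputable def GMW {m n : ℕ} (p : ℝ) (A : Matrix (Fin m) (Fin n) ℝ)
    (y : Fin m → Fin n → ℝ) : ℝ :=
  ((1 / (n : ℝ)) * ∑ i, util A y i ^ p) ^ (1 / p)

open scoped Classical

/-- The set of individuals represented by center `c`. -/
def Ic {n C : ℕ} (ctr : Fin n → Fin C) (c : Fin C) : Finset (Fin n) :=
  Finset.univ.filter fun i => ctr i = c

/-- The Trading Post allocation induced by bids `b`: individual `i` receives the fraction
`b_{j,i} / Σ_{i'} b_{j,i'}` of item `j` (zero if there are no bids on `j`). -/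
noncomputable def tpAlloc {m n : ℕ} (b : Fin m → Fin n → ℝ) : Fin m → Fin n → ℝ :=
  fun j i => if (∑ i', b j i') = 0 then 0 else b j i / ∑ i', b j i'

/-- Bids are valid for the Trading Post mechanism with proportional budgets: nonnegative, and
each center `c` spends at most its budget `|I_c|` in total. -/
def TPValid {m n C : ℕ} (ctr : Fin n → Fin C) (b : Fin m → Fin n → ℝ) : Prop :=
  (∀ j i, 0 ≤ b j i) ∧ ∀ c, ∑ j, ∑ i ∈ Ic ctr c, b j i ≤ ((Ic ctr c).card : ℝ)

/-- `b` is a pure Nash equilibrium of the Trading Post mechanism with proportional budgets,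
where center `c` evaluates allocations by `obj c`: no center can strictly improve its objective
by unilaterally switching to other budget-feasible bids for its own individuals. -/
def TPEquilibrium {m n C : ℕ} (ctr : Fin n → Fin C)
    (obj : Fin C → (Fin m → Fin n → ℝ) → ℝ) (b : Fin m → Fin n → ℝ) : Prop :=
  TPValid ctr b ∧
    ∀ (c : Fin C) (b' : Fin m → Fin n → ℝ), TPValid ctr b' →
      (∀ j i, ctr i ≠ c → b' j i = b j i) →
      obj c (tpAlloc b') ≤ obj c (tpAlloc b)

/-- The Nash social welfare of all `n` individuals: `NSW(y) = (∏ᵢ uᵢ(y))^{1/n}`. -/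
noncomputable def NSW {m n : ℕ} (A : Matrix (Fin m) (Fin n) ℝ)
    (y : Fin m → Fin n → ℝ) : ℝ :=
  (∏ i, util A y i) ^ (1 / (n : ℝ))

/-- Center `c`'s objective: the Nash social welfare of its own individuals,
`NSW_c(y) = (∏_{i∈I_c} uᵢ(y))^{1/|I_c|}`. -/
noncomputable def NSWc {m n C : ℕ} (A : Matrix (Fin m) (Fin n) ℝ)
    (ctr : Fin n → Fin C) (c : Fin C) (y : Fin m → Fin n → ℝ) : ℝ :=
  (∏ i ∈ Ic ctr c, util A y i) ^ (1 / ((Ic ctr c).card : ℝ))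

/- ---------- auxiliary lemmas ---------- -/

lemma tpAlloc_nonneg {m n : ℕ} {b : Fin m → Fin n → ℝ} (hb : ∀ j i, 0 ≤ b j i)
    (j : Fin m) (i : Fin n) : 0 ≤ tpAlloc b j i := by
  unfold tpAlloc
  split
  · exact le_refl 0
  · exact div_nonneg (hb j i) (Finset.sum_nonneg fun i' _ => hb j i')

lemma util_nonneg {m n : ℕ} {A : Matrix (Fin m) (Fin n) ℝ} (hA : ∀ j i, 0 ≤ A j i)
    {y : Fin m → Fin n → ℝ} (hy : ∀ j i, 0 ≤ y j i) (i : Fin n) : 0 ≤ util A y i :=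
  Finset.sum_nonneg fun j _ => mul_nonneg (hA j i) (hy j i)

lemma NSWc_nonneg {m n C : ℕ} {A : Matrix (Fin m) (Fin n) ℝ} {ctr : Fin n → Fin C}
    {c : Fin C} {y : Fin m → Fin n → ℝ} (hy : ∀ i, 0 ≤ util A y i) :
    0 ≤ NSWc A ctr c y :=
  Real.rpow_nonneg (Finset.prod_nonneg fun i _ => hy i) _

lemma mem_Ic {n C : ℕ} {ctr : Fin n → Fin C} {c : Fin C} {i : Fin n} :
    i ∈ Ic ctr c ↔ ctr i = c := by simp [Ic]

lemma prod_Ic {n C : ℕ} (ctr : Fin n → Fin C) (f : Fin n → ℝ) :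
    ∏ c, ∏ i ∈ Ic ctr c, f i = ∏ i, f i := by
  rw [← Finset.prod_fiberwise Finset.univ ctr f]
  apply Finset.prod_congr rfl
  intro c _
  apply Finset.prod_congr _ fun _ _ => rfl
  simp [Ic]

lemma sum_Ic {n C : ℕ} (ctr : Fin n → Fin C) (f : Fin n → ℝ) :
    ∑ c, ∑ i ∈ Ic ctr c, f i = ∑ i, f i := by
  rw [← Finset.sum_fiberwise Finset.univ ctr f]
  apply Finset.sum_congr rfl
  intro c _
  apply Finset.sum_congr _ fun _ _ => rfl
  simp [Ic]

/-- The deviation bids for center `c`: each `i ∈ I_c` bids `t·y*_{j,i}·(B_j+δ)` on item `j`,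
where `B_j` is the total equilibrium bid on `j`; everyone else keeps their bids. -/
noncomputable def devBids {m n C : ℕ} (ctr : Fin n → Fin C) (c : Fin C)
    (b ystar : Fin m → Fin n → ℝ) (δ t : ℝ) : Fin m → Fin n → ℝ :=
  fun j i => if ctr i = c then t * (ystar j i * ((∑ i', b j i') + δ)) else b j i

lemma devBids_nonneg {m n C : ℕ} {ctr : Fin n → Fin C} {c : Fin C}
    {b ystar : Fin m → Fin n → ℝ} {δ t : ℝ} (hb0 : ∀ j i, 0 ≤ b j i)
    (hys0 : ∀ j i, 0 ≤ ystar j i) (hδ : 0 ≤ δ) (ht : 0 ≤ t) (j : Fin m) (i : Fin n) :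
    0 ≤ devBids ctr c b ystar δ t j i := by
  unfold devBids
  split
  · have h1 : 0 ≤ ∑ i', b j i' := Finset.sum_nonneg fun i' _ => hb0 j i'
    have h2 := hys0 j i
    positivity
  · exact hb0 j i

lemma devBids_eq_of_ne {m n C : ℕ} {ctr : Fin n → Fin C} {c : Fin C}
    {b ystar : Fin m → Fin n → ℝ} {δ t : ℝ} (j : Fin m) (i : Fin n) (h : ctr i ≠ c) :
    devBids ctr c b ystar δ t j i = b j i := if_neg h

lemma devBids_sum_Ic {m n C : ℕ} {ctr : Fin n → Fin C} {c : Fin C}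
    (b ystar : Fin m → Fin n → ℝ) (δ t : ℝ) (j : Fin m) :
    ∑ i ∈ Ic ctr c, devBids ctr c b ystar δ t j i =
      t * (((∑ i', b j i') + δ) * ∑ i ∈ Ic ctr c, ystar j i) := by
  have h1 : ∀ i ∈ Ic ctr c, devBids ctr c b ystar δ t j i =
      t * (ystar j i * ((∑ i', b j i') + δ)) := by
    intro i hi
    unfold devBids
    rw [if_pos (mem_Ic.1 hi)]
  rw [Finset.sum_congr rfl h1, Finset.mul_sum, Finset.mul_sum]
  exact Finset.sum_congr rfl fun i _ => by ring

/-- The key share bound: under the deviation bids, individual `i ∈ I_c` receives at least a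
`t/(t+1)` fraction of its `y*` share of each item. -/
lemma dev_share {m n C : ℕ} {ctr : Fin n → Fin C} {c : Fin C}
    {b ystar : Fin m → Fin n → ℝ} (hb0 : ∀ j i, 0 ≤ b j i)
    (hys0 : ∀ j i, 0 ≤ ystar j i) (hysle : ∀ j, ∑ i, ystar j i ≤ 1)
    {δ t : ℝ} (hδ : 0 < δ) (ht : 0 < t) (j : Fin m) (i : Fin n) (hi : i ∈ Ic ctr c) :
    (t / (t + 1)) * ystar j i ≤ tpAlloc (devBids ctr c b ystar δ t) j i := by
  have hic : ctr i = c := mem_Ic.1 hi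
  rcases eq_or_lt_of_le (hys0 j i) with h0 | hpos
  · rw [← h0, mul_zero]
    exact tpAlloc_nonneg (devBids_nonneg hb0 hys0 hδ.le ht.le) j i
  set Bj : ℝ := ∑ i', b j i' with hBj
  have hB0 : 0 ≤ Bj := Finset.sum_nonneg fun i' _ => hb0 j i'
  have hBδ : 0 < Bj + δ := by linarith
  set σj : ℝ := ∑ i ∈ Ic ctr c, ystar j i with hσj
  have hσpos : 0 < σj := lt_of_lt_of_le hpos
    (Finset.single_le_sum (fun i' _ => hys0 j i') hi)
  have hσ1 : σj ≤ 1 := le_trans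
    (Finset.sum_le_sum_of_subset_of_nonneg (Finset.subset_univ _) fun i' _ _ => hys0 j i')
    (hysle j)
  set R : ℝ := ∑ i' ∈ Finset.univ.filter (fun i' => ¬ ctr i' = c), b j i' with hR
  have hR0 : 0 ≤ R := Finset.sum_nonneg fun i' _ => hb0 j i'
  have hRB : R ≤ Bj := by
    rw [hR, hBj]
    exact Finset.sum_le_sum_of_subset_of_nonneg (Finset.filter_subset _ _)
      fun i' _ _ => hb0 j i'
  have hSsplit : ∑ i', devBids ctr c b ystar δ t j i' = t * ((Bj + δ) * σj) + R := by
    rw [← Finset.sum_filter_add_sum_filter_not Finset.univ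
      (fun i' => ctr i' = c) (devBids ctr c b ystar δ t j)]
    congr 1
    · exact devBids_sum_Ic b ystar δ t j
    · exact Finset.sum_congr rfl fun i' hi' =>
        devBids_eq_of_ne j i' (Finset.mem_filter.1 hi').2
  have hSpos : 0 < ∑ i', devBids ctr c b ystar δ t j i' := by
    rw [hSsplit]
    have := mul_pos ht (mul_pos hBδ hσpos)
    linarith
  have halloc : tpAlloc (devBids ctr c b ystar δ t) j i =
      t * (ystar j i * (Bj + δ)) / ∑ i', devBids ctr c b ystar δ t j i' := by
    unfold tpAlloc
    rw [if_neg hSpos.ne']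
    congr 1
    unfold devBids
    rw [if_pos hic]
  rw [halloc, le_div_iff₀ hSpos]
  have hS_le : ∑ i', devBids ctr c b ystar δ t j i' ≤ (t + 1) * (Bj + δ) := by
    have h1 : t * ((Bj + δ) * σj) ≤ t * (Bj + δ) := by
      refine mul_le_mul_of_nonneg_left ?_ ht.le
      have h1a : (Bj + δ) * σj ≤ (Bj + δ) * 1 :=
        mul_le_mul_of_nonneg_left hσ1 hBδ.le
      rw [mul_one] at h1a
      exact h1a
    have h2 : R ≤ Bj + δ := by linarith
    calc ∑ i', devBids ctr c b ystar δ t j i' = t * ((Bj + δ) * σj) + R := hSsplit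
      _ ≤ t * (Bj + δ) + (Bj + δ) := add_le_add h1 h2
      _ = (t + 1) * (Bj + δ) := by ring
  have ht1 : (0:ℝ) < t + 1 := by linarith
  have hfrac : t / (t + 1) * (t + 1) = t := div_mul_cancel₀ t ht1.ne'
  calc t / (t + 1) * ystar j i * (∑ i', devBids ctr c b ystar δ t j i')
      ≤ t / (t + 1) * ystar j i * ((t + 1) * (Bj + δ)) := by
        refine mul_le_mul_of_nonneg_left hS_le ?_
        have h3 : 0 ≤ t / (t + 1) := by positivity
        exact mul_nonneg h3 (hys0 j i)
    _ = (t / (t + 1) * (t + 1)) * (ystar j i * (Bj + δ)) := by ring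
    _ = t * (ystar j i * (Bj + δ)) := by rw [hfrac]

/-- Per-center equilibrium bound: at equilibrium, center `c`'s Nash welfare is at least a
`k/(k+q)` fraction of its Nash welfare under any feasible target allocation, where `q` is the
(δ-padded) cost of the target bundle at the equilibrium prices. -/
lemma center_bound {m n C : ℕ} {A : Matrix (Fin m) (Fin n) ℝ} (hA0 : ∀ j i, 0 ≤ A j i)
    {ctr : Fin n → Fin C} {c : Fin C} {b ystar : Fin m → Fin n → ℝ}
    (hb0 : ∀ j i, 0 ≤ b j i)
    (hbud : ∀ c', ∑ j, ∑ i ∈ Ic ctr c', b j i ≤ ((Ic ctr c').card : ℝ))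
    (hys0 : ∀ j i, 0 ≤ ystar j i) (hysle : ∀ j, ∑ i, ystar j i ≤ 1)
    (hupos : ∀ i, 0 < util A ystar i) (hkpos : 0 < (Ic ctr c).card)
    {δ : ℝ} (hδ : 0 < δ)
    (hNEc : ∀ b', TPValid ctr b' → (∀ j i, ctr i ≠ c → b' j i = b j i) →
        NSWc A ctr c (tpAlloc b') ≤ NSWc A ctr c (tpAlloc b)) :
    (((Ic ctr c).card : ℝ) /
        (((Ic ctr c).card : ℝ) + ∑ j, ((∑ i', b j i') + δ) * ∑ i ∈ Ic ctr c, ystar j i)) *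
      NSWc A ctr c ystar ≤ NSWc A ctr c (tpAlloc b) := by
  have hkR : (0:ℝ) < ((Ic ctr c).card : ℝ) := by exact_mod_cast hkpos
  set k : ℝ := ((Ic ctr c).card : ℝ) with hk
  set q : ℝ := ∑ j, ((∑ i', b j i') + δ) * ∑ i ∈ Ic ctr c, ystar j i with hq
  have hqpos : 0 < q := by
    obtain ⟨i, hi⟩ := Finset.card_pos.1 hkpos
    obtain ⟨j, hj⟩ : ∃ j, 0 < ystar j i := by
      by_contra h
      push_neg at h
      have h1 : util A ystar i ≤ 0 := Finset.sum_nonpos fun j _ =>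
        mul_nonpos_of_nonneg_of_nonpos (hA0 j i) (h j)
      exact absurd (hupos i) (not_lt.2 h1)
    have hterm : 0 < ((∑ i', b j i') + δ) * ∑ i' ∈ Ic ctr c, ystar j i' := by
      have h1 : 0 ≤ ∑ i', b j i' := Finset.sum_nonneg fun i' _ => hb0 j i'
      have h2 : 0 < ∑ i' ∈ Ic ctr c, ystar j i' :=
        lt_of_lt_of_le hj (Finset.single_le_sum (fun i' _ => hys0 j i') hi)
      have h3 : 0 < (∑ i', b j i') + δ := by linarith
      exact mul_pos h3 h2
    rw [hq]
    refine lt_of_lt_of_le hterm (Finset.single_le_sum (f := fun j =>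
      ((∑ i', b j i') + δ) * ∑ i' ∈ Ic ctr c, ystar j i') ?_ (Finset.mem_univ j))
    intro j' _
    have h1 : 0 ≤ ∑ i', b j' i' := Finset.sum_nonneg fun i' _ => hb0 j' i'
    have h2 : 0 ≤ ∑ i' ∈ Ic ctr c, ystar j' i' :=
      Finset.sum_nonneg fun i' _ => hys0 j' i'
    have h3 : 0 ≤ (∑ i', b j' i') + δ := by linarith
    exact mul_nonneg h3 h2
  set t : ℝ := k / q with ht
  have htpos : 0 < t := div_pos hkR hqpos
  -- the deviation is budget-feasible
  have hvalid : TPValid ctr (devBids ctr c b ystar δ t) := by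
    refine ⟨devBids_nonneg hb0 hys0 hδ.le htpos.le, fun c' => ?_⟩
    by_cases hcc : c' = c
    · subst hcc
      have h2 : ∑ j, ∑ i ∈ Ic ctr c', devBids ctr c' b ystar δ t j i = t * q := by
        rw [Finset.sum_congr rfl fun j _ => devBids_sum_Ic b ystar δ t j, hq,
          Finset.mul_sum]
      rw [h2, ht, div_mul_cancel₀ _ hqpos.ne']
    · have h3 : ∀ j, ∑ i ∈ Ic ctr c', devBids ctr c b ystar δ t j i =
          ∑ i ∈ Ic ctr c', b j i := by
        intro j
        refine Finset.sum_congr rfl fun i hi => ?_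
        exact devBids_eq_of_ne j i (by rw [mem_Ic.1 hi]; exact hcc)
      rw [Finset.sum_congr rfl fun j _ => h3 j]
      exact hbud c'
  have hle := hNEc _ hvalid (fun j i h => devBids_eq_of_ne j i h)
  -- utility bound from the share bound
  have hutil : ∀ i ∈ Ic ctr c, (t / (t + 1)) * util A ystar i ≤
      util A (tpAlloc (devBids ctr c b ystar δ t)) i := by
    intro i hi
    unfold util
    rw [Finset.mul_sum]
    refine Finset.sum_le_sum fun j _ => ?_
    calc t / (t + 1) * (A j i * ystar j i) = A j i * (t / (t + 1) * ystar j i) := by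
          ring
      _ ≤ A j i * tpAlloc (devBids ctr c b ystar δ t) j i :=
          mul_le_mul_of_nonneg_left (dev_share hb0 hys0 hysle hδ htpos j i hi) (hA0 j i)
  have hf : 0 < t / (t + 1) := by positivity
  have hprodA : 0 ≤ ∏ i ∈ Ic ctr c, util A ystar i :=
    Finset.prod_nonneg fun i _ => (hupos i).le
  have hprodle : (t / (t + 1)) ^ (Ic ctr c).card * ∏ i ∈ Ic ctr c, util A ystar i ≤
      ∏ i ∈ Ic ctr c, util A (tpAlloc (devBids ctr c b ystar δ t)) i := by
    have h := Finset.prod_le_prod (s := Ic ctr c)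
      (f := fun i => (t / (t + 1)) * util A ystar i)
      (g := fun i => util A (tpAlloc (devBids ctr c b ystar δ t)) i)
      (fun i _ => mul_nonneg hf.le (hupos i).le) (fun i hi => hutil i hi)
    simpa [Finset.prod_mul_distrib, Finset.prod_const, div_pow] using h
  have h3 : (t / (t + 1)) * NSWc A ctr c ystar ≤
      NSWc A ctr c (tpAlloc (devBids ctr c b ystar δ t)) := by
    unfold NSWc
    have h4 := Real.rpow_le_rpow (by positivity) hprodle
      (by positivity : (0:ℝ) ≤ 1 / ((Ic ctr c).card : ℝ))
    rw [Real.mul_rpow (by positivity) hprodA] at h4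
    rw [← Real.rpow_natCast (t / (t + 1)) (Ic ctr c).card,
      ← Real.rpow_mul hf.le] at h4
    have h5 : ((Ic ctr c).card : ℝ) * (1 / ((Ic ctr c).card : ℝ)) = 1 := by
      field_simp
    rw [h5, Real.rpow_one] at h4
    exact h4
  have hftk : t / (t + 1) = k / (k + q) := by
    rw [ht, div_add_one hqpos.ne', div_div_div_eq]
    rw [mul_comm k q, mul_div_mul_left _ _ hqpos.ne']
  rw [← hftk]
  exact le_trans h3 hle

/-- Decomposition of the total Nash welfare into per-center Nash welfares. -/
lemma NSW_decomp {m n C : ℕ} (hn : 0 < n) (A : Matrix (Fin m) (Fin n) ℝ)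
    (ctr : Fin n → Fin C) (hkpos : ∀ c, 0 < (Ic ctr c).card)
    (y : Fin m → Fin n → ℝ) (hy : ∀ i, 0 ≤ util A y i) :
    NSW A y = ∏ c, (NSWc A ctr c y) ^ (((Ic ctr c).card : ℝ) / n) := by
  have hnR : (0:ℝ) < n := by exact_mod_cast hn
  have hP0 : ∀ c, 0 ≤ ∏ i ∈ Ic ctr c, util A y i :=
    fun c => Finset.prod_nonneg fun i _ => hy i
  have h1 : ∀ c, (NSWc A ctr c y) ^ (((Ic ctr c).card : ℝ) / n) =
      (∏ i ∈ Ic ctr c, util A y i) ^ (1 / (n : ℝ)) := by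
    intro c
    unfold NSWc
    rw [← Real.rpow_mul (hP0 c)]
    congr 1
    have hkR : (0:ℝ) < ((Ic ctr c).card : ℝ) := by exact_mod_cast hkpos c
    field_simp
  rw [Finset.prod_congr rfl fun c _ => h1 c]
  rw [Real.finset_prod_rpow _ _ (fun c _ => hP0 c) _]
  unfold NSW
  rw [prod_Ic ctr (util A y)]

/-- **Theorem (Nash social welfare PoA of Trading Post).** For any nonnegative valuation matrix,
at every pure Nash equilibrium `b` of the Trading Post mechanism with proportional budgets (each
center maximizing the Nash social welfare of its own individuals), the induced allocation
`ỹ = tpAlloc b` satisfies `NSW(y*) ≤ 2 · NSW(ỹ)` for every feasible allocation `y*`. -/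
theorem tradingPost_nsw_poa_le_two {m n C : ℕ} (hm : 0 < m) (hn : 0 < n) (hC : 0 < C)
    (A : Matrix (Fin m) (Fin n) ℝ) (hA0 : ∀ j i, 0 ≤ A j i)
    (ctr : Fin n → Fin C) (hsurj : ∀ c, ∃ i, ctr i = c)
    (b : Fin m → Fin n → ℝ)
    (heq : TPEquilibrium ctr (fun c y => NSWc A ctr c y) b) :
    ∀ ystar : Fin m → Fin n → ℝ, Feasible ystar →
      NSW A ystar ≤ 2 * NSW A (tpAlloc b) := by
  obtain ⟨⟨hb0, hbud⟩, hNE⟩ := heq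
  intro ystar hys
  obtain ⟨hys0, hysle⟩ := hys
  have hnR : (0:ℝ) < n := by exact_mod_cast hn
  have hmR : (0:ℝ) < m := by exact_mod_cast hm
  have halloc0 : ∀ j i, 0 ≤ tpAlloc b j i := tpAlloc_nonneg hb0
  have hu0 : ∀ i, 0 ≤ util A (tpAlloc b) i := util_nonneg hA0 halloc0
  have hNSW0 : 0 ≤ NSW A (tpAlloc b) :=
    Real.rpow_nonneg (Finset.prod_nonneg fun i _ => hu0 i) _
  by_cases hzero : ∃ i, util A ystar i = 0
  · obtain ⟨i, hi⟩ := hzero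
    have h1 : NSW A ystar = 0 := by
      unfold NSW
      rw [Finset.prod_eq_zero (Finset.mem_univ i) hi, Real.zero_rpow (by positivity)]
    rw [h1]
    positivity
  push_neg at hzero
  have hupos : ∀ i, 0 < util A ystar i := fun i =>
    lt_of_le_of_ne (util_nonneg hA0 hys0 i) (Ne.symm (hzero i))
  have hkpos : ∀ c, 0 < (Ic ctr c).card := by
    intro c
    obtain ⟨i, hi⟩ := hsurj c
    exact Finset.card_pos.2 ⟨i, mem_Ic.2 hi⟩
  have hkR : ∀ c, (0:ℝ) < ((Ic ctr c).card : ℝ) := fun c => by exact_mod_cast hkpos c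
  have hksum : ∑ c, (((Ic ctr c).card : ℝ)) = (n : ℝ) := by
    have h := sum_Ic ctr (fun _ => (1:ℝ))
    simpa [Finset.sum_const, mul_comm] using h
  -- the ε-approximate bound
  have key : ∀ ε : ℝ, 0 < ε → NSW A ystar ≤ (2 + ε) * NSW A (tpAlloc b) := by
    intro ε hε
    have hδ : 0 < ε * n / m := by positivity
    -- per-center costs
    set q : Fin C → ℝ :=
      fun c => ∑ j, ((∑ i', b j i') + ε * n / m) * ∑ i ∈ Ic ctr c, ystar j i with hqdef
    have hq0 : ∀ c, 0 ≤ q c := by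
      intro c
      refine Finset.sum_nonneg fun j _ => mul_nonneg ?_ ?_
      · have h1 : 0 ≤ ∑ i', b j i' := Finset.sum_nonneg fun i' _ => hb0 j i'
        linarith
      · exact Finset.sum_nonneg fun i' _ => hys0 j i'
    have hBsum : ∑ j, (∑ i', b j i') ≤ (n : ℝ) := by
      calc ∑ j, (∑ i', b j i') = ∑ j, ∑ c, ∑ i ∈ Ic ctr c, b j i :=
            Finset.sum_congr rfl fun j _ => (sum_Ic ctr (b j)).symm
        _ = ∑ c, ∑ j, ∑ i ∈ Ic ctr c, b j i := Finset.sum_comm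
        _ ≤ ∑ c, ((Ic ctr c).card : ℝ) := Finset.sum_le_sum fun c _ => hbud c
        _ = n := hksum
    have hqsum : ∑ c, q c ≤ (n : ℝ) + ε * n := by
      have h1 : ∑ c, q c = ∑ j, ((∑ i', b j i') + ε * n / m) * (∑ c, ∑ i ∈ Ic ctr c, ystar j i) := by
        rw [hqdef, Finset.sum_comm]
        exact Finset.sum_congr rfl fun j _ => by rw [Finset.mul_sum]
      have h2 : ∀ j, ∑ c, ∑ i ∈ Ic ctr c, ystar j i ≤ 1 := by
        intro j
        rw [sum_Ic ctr (ystar j)]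
        exact hysle j
      have hmδ : (m : ℝ) * (ε * n / m) = ε * n := by field_simp
      calc ∑ c, q c
          = ∑ j, ((∑ i', b j i') + ε * n / m) * (∑ c, ∑ i ∈ Ic ctr c, ystar j i) := h1
        _ ≤ ∑ j, ((∑ i', b j i') + ε * n / m) * 1 := by
            refine Finset.sum_le_sum fun j _ => mul_le_mul_of_nonneg_left (h2 j) ?_
            have h3 : 0 ≤ ∑ i', b j i' := Finset.sum_nonneg fun i' _ => hb0 j i'
            linarith
        _ = (∑ j, (∑ i', b j i')) + (m : ℝ) * (ε * n / m) := by
            simp [mul_one, Finset.sum_add_distrib, Finset.sum_const, Finset.card_univ,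
              nsmul_eq_mul]
        _ ≤ (n : ℝ) + ε * n := by rw [hmδ]; linarith
    -- per-center bounds via `center_bound`
    have hcen : ∀ c, (((Ic ctr c).card : ℝ) / (((Ic ctr c).card : ℝ) + q c)) *
        NSWc A ctr c ystar ≤ NSWc A ctr c (tpAlloc b) := by
      intro c
      simp only [hqdef]
      exact center_bound hA0 hb0 hbud hys0 hysle hupos (hkpos c) hδ
        (fun b' hv hfx => hNE c b' hv hfx)
    clear_value q
    clear hqdef
    -- weights
    have hwsum : ∑ c, ((Ic ctr c).card : ℝ) / n = 1 := by
      rw [← Finset.sum_div, hksum, div_self hnR.ne']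
    have hGM := Real.geom_mean_le_arith_mean_weighted Finset.univ
      (fun c => ((Ic ctr c).card : ℝ) / n)
      (fun c => (((Ic ctr c).card : ℝ) + q c) / ((Ic ctr c).card : ℝ))
      (fun c _ => by positivity) hwsum
      (fun c _ => div_nonneg (by have := hq0 c; have := (hkR c).le; linarith) (hkR c).le)
    have hAM : ∑ c, (((Ic ctr c).card : ℝ) / n) *
        ((((Ic ctr c).card : ℝ) + q c) / ((Ic ctr c).card : ℝ)) ≤ 2 + ε := by
      have heach : ∀ c, (((Ic ctr c).card : ℝ) / n) *
          ((((Ic ctr c).card : ℝ) + q c) / ((Ic ctr c).card : ℝ)) =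
          (((Ic ctr c).card : ℝ) + q c) / n := by
        intro c
        have hkne := (hkR c).ne'
        field_simp
      rw [Finset.sum_congr rfl fun c _ => heach c, ← Finset.sum_div,
        Finset.sum_add_distrib, hksum, div_le_iff₀ hnR]
      nlinarith [hqsum]
    -- chain everything
    calc NSW A ystar
        = ∏ c, (NSWc A ctr c ystar) ^ (((Ic ctr c).card : ℝ) / n) :=
          NSW_decomp hn A ctr hkpos ystar (fun i => (hupos i).le)
      _ ≤ ∏ c, (((((Ic ctr c).card : ℝ) + q c) / ((Ic ctr c).card : ℝ)) *
            NSWc A ctr c (tpAlloc b)) ^ (((Ic ctr c).card : ℝ) / n) := by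
          refine Finset.prod_le_prod (fun c _ => ?_) (fun c _ => ?_)
          · exact Real.rpow_nonneg (NSWc_nonneg fun i => (hupos i).le) _
          · refine Real.rpow_le_rpow (NSWc_nonneg fun i => (hupos i).le) ?_
              (by positivity)
            have h := hcen c
            have hk := hkR c
            have hkq : (0:ℝ) < ((Ic ctr c).card : ℝ) + q c := by
              have := hq0 c; linarith
            have h6 : NSWc A ctr c ystar =
                ((((Ic ctr c).card : ℝ) + q c) / ((Ic ctr c).card : ℝ)) *
                ((((Ic ctr c).card : ℝ) / (((Ic ctr c).card : ℝ) + q c)) *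
                  NSWc A ctr c ystar) := by
              rw [← mul_assoc, div_mul_div_comm, mul_comm (((Ic ctr c).card : ℝ) + q c),
                div_self (by positivity), one_mul]
            rw [h6]
            exact mul_le_mul_of_nonneg_left h (div_nonneg hkq.le hk.le)
      _ = (∏ c, ((((Ic ctr c).card : ℝ) + q c) / ((Ic ctr c).card : ℝ)) ^
            (((Ic ctr c).card : ℝ) / n)) *
          ∏ c, (NSWc A ctr c (tpAlloc b)) ^ (((Ic ctr c).card : ℝ) / n) := by
          rw [← Finset.prod_mul_distrib]
          refine Finset.prod_congr rfl fun c _ => ?_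
          refine Real.mul_rpow ?_ (NSWc_nonneg hu0)
          have := hq0 c
          have := hkR c
          positivity
      _ ≤ (2 + ε) * NSW A (tpAlloc b) := by
          rw [← NSW_decomp hn A ctr hkpos (tpAlloc b) hu0]
          exact mul_le_mul_of_nonneg_right (le_trans hGM hAM) hNSW0
  -- conclude
  rcases eq_or_lt_of_le hNSW0 with hN0 | hNpos
  · have h := key 1 one_pos
    rw [← hN0] at h ⊢
    simpa using h
  · refine le_of_forall_pos_le_add fun ε' hε' => ?_
    have h := key (ε' / NSW A (tpAlloc b)) (div_pos hε' hNpos)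
    calc NSW A ystar ≤ (2 + ε' / NSW A (tpAlloc b)) * NSW A (tpAlloc b) := h
      _ = 2 * NSW A (tpAlloc b) + ε' := by
          field_simp
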